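/- arXiv:2310.12096 — 2 statements merged into one kernel-verified Lean document; each statement's English description precedes it below -/
import Mathlib

section
/- Let e be a vital edge and C(e) a mincut for e (an (s,t)-cut of least capacity among those in which e is a contributing edge). Then there exists a maximum (s,t)-flow f in G such that every edge entering C(e) carries zero flow, the edge e carries exactly w_min(e) flow (where w_min(e) is the decrease in the minimum (s,t)-cut capacity caused by deleting e), and every other contributing edge e' of C(e) is fully saturated, i.e., f(e') = w(e'). -/
set_option linter.unusedSectionVars false
set_option maxHeartbeats 1000000

open Finset

variable {V : Type*} [Fintype V] [DecidableEq V]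

/-- capacity of the cut given by the source-side vertex set `C`:
total capacity of edges with tail in `C` and head outside `C`. -/
noncomputable def cutCap (E : Finset (V × V)) (w : V × V → ℝ) (C : Finset V) : ℝ :=
  ∑ e ∈ E.filter (fun e => e.1 ∈ C ∧ e.2 ∉ C), w e

/-- `C` is an (s,t)-cut. -/
def IsCut (s t : V) (C : Finset V) : Prop := s ∈ C ∧ t ∉ C

/-- edge `e` is a contributing (outgoing) edge of the cut `C`. -/
def Contributes (e : V × V) (C : Finset V) : Prop := e.1 ∈ C ∧ e.2 ∉ C

/-- `f` is a feasible (s,t)-flow on edge set `E` with capacities `w`. -/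
structure IsFlow (E : Finset (V × V)) (w : V × V → ℝ) (s t : V) (f : V × V → ℝ) : Prop where
  nonneg : ∀ e ∈ E, 0 ≤ f e
  le_cap : ∀ e ∈ E, f e ≤ w e
  support : ∀ e, e ∉ E → f e = 0
  conserve : ∀ v, v ≠ s → v ≠ t →
    ∑ e ∈ E.filter (fun e => e.1 = v), f e = ∑ e ∈ E.filter (fun e => e.2 = v), f e

/-- value of an (s,t)-flow: the net flow out of `s`. -/
noncomputable def flowValue (E : Finset (V × V)) (s : V) (f : V × V → ℝ) : ℝ :=
  ∑ e ∈ E.filter (fun e => e.1 = s), f e - ∑ e ∈ E.filter (fun e => e.2 = s), f e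

/-- `f` is a maximum (s,t)-flow. -/
def IsMaxFlow (E : Finset (V × V)) (w : V × V → ℝ) (s t : V) (f : V × V → ℝ) : Prop :=
  IsFlow E w s t f ∧ ∀ g, IsFlow E w s t g → flowValue E s g ≤ flowValue E s f

/-- capacity of a minimum (s,t)-cut. -/
noncomputable def minCutCap (E : Finset (V × V)) (w : V × V → ℝ) (s t : V) : ℝ :=
  sInf {x | ∃ C : Finset V, IsCut s t C ∧ cutCap E w C = x}

/-- `e` is a vital edge: deleting it strictly decreases the min (s,t)-cut capacity. -/
def Vital (E : Finset (V × V)) (w : V × V → ℝ) (s t : V) (e : V × V) : Prop :=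
  e ∈ E ∧ minCutCap (E.erase e) w s t < minCutCap E w s t

/-- `C` is a mincut for the edge `e`: a least-capacity (s,t)-cut in which `e` contributes. -/
def IsMincutFor (E : Finset (V × V)) (w : V × V → ℝ) (s t : V) (e : V × V)
    (C : Finset V) : Prop :=
  IsCut s t C ∧ Contributes e C ∧
    ∀ C', IsCut s t C' → Contributes e C' → cutCap E w C ≤ cutCap E w C'

/-- total flow on edges leaving the cut `C`. -/
noncomputable def flowOut (E : Finset (V × V)) (f : V × V → ℝ) (C : Finset V) : ℝ :=
  ∑ e ∈ E.filter (fun e => e.1 ∈ C ∧ e.2 ∉ C), f e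

/-- total flow on edges entering the cut `C`. -/
noncomputable def flowIn (E : Finset (V × V)) (f : V × V → ℝ) (C : Finset V) : ℝ :=
  ∑ e ∈ E.filter (fun e => e.1 ∉ C ∧ e.2 ∈ C), f e

/-! ### Auxiliary development: max-flow min-cut -/

lemma sum_heads (E : Finset (V × V)) (f : V × V → ℝ) (C : Finset V) :
    ∑ v ∈ C, ∑ e ∈ E.filter (fun e => e.1 = v), f e
      = ∑ e ∈ E, if e.1 ∈ C then f e else 0 := by
  have : ∀ v ∈ C, ∑ e ∈ E.filter (fun e => e.1 = v), f e
      = ∑ e ∈ E, if e.1 = v then f e else 0 := by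
    intro v _; rw [Finset.sum_filter]
  rw [Finset.sum_congr rfl this, Finset.sum_comm]
  refine Finset.sum_congr rfl fun e _ => ?_
  rw [Finset.sum_ite_eq C e.1 (fun _ => f e)]

lemma sum_tails (E : Finset (V × V)) (f : V × V → ℝ) (C : Finset V) :
    ∑ v ∈ C, ∑ e ∈ E.filter (fun e => e.2 = v), f e
      = ∑ e ∈ E, if e.2 ∈ C then f e else 0 := by
  have : ∀ v ∈ C, ∑ e ∈ E.filter (fun e => e.2 = v), f e
      = ∑ e ∈ E, if e.2 = v then f e else 0 := by
    intro v _; rw [Finset.sum_filter]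
  rw [Finset.sum_congr rfl this, Finset.sum_comm]
  refine Finset.sum_congr rfl fun e _ => ?_
  rw [Finset.sum_ite_eq C e.2 (fun _ => f e)]

lemma sum_excess (E : Finset (V × V)) (f : V × V → ℝ) (C : Finset V) :
    ∑ v ∈ C, ((∑ e ∈ E.filter (fun e => e.1 = v), f e)
        - ∑ e ∈ E.filter (fun e => e.2 = v), f e)
      = flowOut E f C - flowIn E f C := by
  rw [Finset.sum_sub_distrib, sum_heads, sum_tails, flowOut, flowIn,
    Finset.sum_filter, Finset.sum_filter, ← Finset.sum_sub_distrib, ← Finset.sum_sub_distrib]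
  refine Finset.sum_congr rfl fun e _ => ?_
  by_cases h1 : e.1 ∈ C <;> by_cases h2 : e.2 ∈ C <;> simp [h1, h2]

lemma value_eq_cut {E : Finset (V × V)} {w : V × V → ℝ} {s t : V} {f : V × V → ℝ}
    (hf : IsFlow E w s t f) {C : Finset V} (hC : IsCut s t C) :
    flowValue E s f = flowOut E f C - flowIn E f C := by
  rw [← sum_excess]
  rw [Finset.sum_eq_single_of_mem s hC.1]
  · rfl
  · intro v hv hvs
    have hvt : v ≠ t := fun h => hC.2 (h ▸ hv)
    rw [hf.conserve v hvs hvt, sub_self]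

lemma weak_duality {E : Finset (V × V)} {w : V × V → ℝ} {s t : V} {f : V × V → ℝ}
    (hf : IsFlow E w s t f) {C : Finset V} (hC : IsCut s t C) :
    flowValue E s f ≤ cutCap E w C := by
  rw [value_eq_cut hf hC]
  have h1 : flowOut E f C ≤ cutCap E w C :=
    Finset.sum_le_sum fun e he => hf.le_cap e (Finset.mem_filter.1 he).1
  have h2 : 0 ≤ flowIn E f C :=
    Finset.sum_nonneg fun e he => hf.nonneg e (Finset.mem_filter.1 he).1
  linarith

lemma cutSet_finite (E : Finset (V × V)) (w : V × V → ℝ) (s t : V) :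
    {x | ∃ C : Finset V, IsCut s t C ∧ cutCap E w C = x}.Finite :=
  (Set.finite_range (cutCap E w)).subset (by rintro x ⟨C, _, h⟩; exact ⟨C, h⟩)

lemma cutSet_nonempty {s t : V} (hst : s ≠ t) (E : Finset (V × V)) (w : V × V → ℝ) :
    {x | ∃ C : Finset V, IsCut s t C ∧ cutCap E w C = x}.Nonempty :=
  ⟨cutCap E w {s}, {s}, ⟨Finset.mem_singleton_self s,
    fun h => hst (Finset.mem_singleton.1 h).symm⟩, rfl⟩

lemma minCutCap_mem {s t : V} (hst : s ≠ t) (E : Finset (V × V)) (w : V × V → ℝ) :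
    ∃ C : Finset V, IsCut s t C ∧ cutCap E w C = minCutCap E w s t :=
  (cutSet_nonempty hst E w).csInf_mem (cutSet_finite E w s t)

lemma minCutCap_le {s t : V} (E : Finset (V × V)) (w : V × V → ℝ) {C : Finset V}
    (hC : IsCut s t C) : minCutCap E w s t ≤ cutCap E w C :=
  csInf_le (cutSet_finite E w s t).bddBelow ⟨C, hC, rfl⟩

lemma exists_maxflow (E : Finset (V × V)) (w : V × V → ℝ) (s t : V)
    (hw : ∀ e ∈ E, 0 ≤ w e) :
    ∃ f, IsFlow E w s t f ∧ ∀ g, IsFlow E w s t g → flowValue E s g ≤ flowValue E s f := by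
  classical
  set K : Set (V × V → ℝ) := {f | IsFlow E w s t f} with hK
  have hsub : K ⊆ Set.Icc (0 : V × V → ℝ) (fun e => max (w e) 0) := by
    intro f hf
    constructor
    · intro e
      by_cases he : e ∈ E
      · exact hf.nonneg e he
      · exact le_of_eq (hf.support e he).symm
    · intro e
      by_cases he : e ∈ E
      · exact le_max_of_le_left (hf.le_cap e he)
      · exact (hf.support e he).le.trans (le_max_right _ _)
  have hclosed : IsClosed K := by
    have hrw : K =
        (⋂ e ∈ E, {f : V × V → ℝ | 0 ≤ f e}) ∩
        ((⋂ e ∈ E, {f : V × V → ℝ | f e ≤ w e}) ∩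
        ((⋂ e ∈ {e : V × V | e ∉ E}, {f : V × V → ℝ | f e = 0}) ∩
        (⋂ v ∈ {v : V | v ≠ s ∧ v ≠ t}, {f : V × V → ℝ |
          ∑ e ∈ E.filter (fun e => e.1 = v), f e
            = ∑ e ∈ E.filter (fun e => e.2 = v), f e}))) := by
      ext f
      simp only [hK, Set.mem_inter_iff, Set.mem_iInter, Set.mem_setOf_eq]
      constructor
      · rintro ⟨h1, h2, h3, h4⟩
        exact ⟨h1, h2, h3, fun v hv => h4 v hv.1 hv.2⟩
      · rintro ⟨h1, h2, h3, h4⟩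
        exact ⟨h1, h2, h3, fun v hv1 hv2 => h4 v ⟨hv1, hv2⟩⟩
    rw [hrw]
    refine (isClosed_biInter fun e _ => ?_).inter
      ((isClosed_biInter fun e _ => ?_).inter
      ((isClosed_biInter fun e _ => ?_).inter (isClosed_biInter fun v _ => ?_)))
    · exact isClosed_le continuous_const (continuous_apply e)
    · exact isClosed_le (continuous_apply e) continuous_const
    · exact isClosed_eq (continuous_apply e) continuous_const
    · exact isClosed_eq (continuous_finset_sum _ fun e _ => continuous_apply e)
        (continuous_finset_sum _ fun e _ => continuous_apply e)
  have hcomp : IsCompact K := (isCompact_Icc).of_isClosed_subset hclosed hsub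
  have h0 : (0 : V × V → ℝ) ∈ K := by
    refine ⟨fun e _ => le_refl 0, fun e he => hw e he, fun e _ => rfl, fun v _ _ => by simp⟩
  have hcont : Continuous (flowValue E s) :=
    (continuous_finset_sum _ fun e _ => continuous_apply e).sub
      (continuous_finset_sum _ fun e _ => continuous_apply e)
  obtain ⟨f, hfK, hmax⟩ := hcomp.exists_isMaxOn ⟨0, h0⟩ hcont.continuousOn
  exact ⟨f, hfK, fun g hg => hmax hg⟩

/-- a residual step for flow `f`. -/
def resStep (E : Finset (V × V)) (w f : V × V → ℝ) (a b : V) : Prop :=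
  ((a, b) ∈ E ∧ f (a, b) < w (a, b)) ∨ ((b, a) ∈ E ∧ 0 < f (b, a))

lemma ifSymm (x y : V) : (if x = y then (1:ℝ) else 0) = (if y = x then 1 else 0) := by
  by_cases h : x = y
  · subst h; rfl
  · rw [if_neg h, if_neg (fun hh => h hh.symm)]

lemma aug_exists (E : Finset (V × V)) (w f : V × V → ℝ) {s u : V}
    (h : Relation.ReflTransGen (resStep E w f) s u) :
    ∃ g : V × V → ℝ,
      (∀ d, d ∉ E → g d = 0) ∧
      (∀ d ∈ E, 0 < g d → f d < w d) ∧
      (∀ d ∈ E, g d < 0 → 0 < f d) ∧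
      (∀ v : V, (∑ e ∈ E.filter (fun e => e.1 = v), g e)
          - (∑ e ∈ E.filter (fun e => e.2 = v), g e)
        = (if v = s then 1 else 0) - (if v = u then 1 else 0)) := by
  classical
  induction h with
  | refl => exact ⟨0, fun _ _ => rfl, by simp, by simp, by intro v; simp⟩
  | @tail b c _ hstep ih =>
    obtain ⟨g, hsup, hpos, hneg, hdiv⟩ := ih
    have key : ∀ (d₀ : V × V), d₀ ∈ E → ∀ (σ : ℝ),
        (∀ v : V, (∑ e ∈ E.filter (fun e => e.1 = v), (g e + σ * (if e = d₀ then 1 else 0)))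
            - (∑ e ∈ E.filter (fun e => e.2 = v), (g e + σ * (if e = d₀ then 1 else 0)))
          = (if v = s then 1 else 0) - (if v = b then 1 else 0)
            + σ * ((if d₀.1 = v then 1 else 0) - (if d₀.2 = v then 1 else 0))) := by
      intro d₀ hd₀ σ v
      have h1 : ∑ e ∈ E.filter (fun e => e.1 = v), (if e = d₀ then (1:ℝ) else 0)
          = if d₀.1 = v then 1 else 0 := by
        rw [Finset.sum_ite_eq' (E.filter (fun e => e.1 = v)) d₀ (fun _ => (1:ℝ))]
        simp [Finset.mem_filter, hd₀]
      have h2 : ∑ e ∈ E.filter (fun e => e.2 = v), (if e = d₀ then (1:ℝ) else 0)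
          = if d₀.2 = v then 1 else 0 := by
        rw [Finset.sum_ite_eq' (E.filter (fun e => e.2 = v)) d₀ (fun _ => (1:ℝ))]
        simp [Finset.mem_filter, hd₀]
      rw [Finset.sum_add_distrib, Finset.sum_add_distrib, ← Finset.mul_sum, ← Finset.mul_sum,
        h1, h2]
      linear_combination hdiv v
    rcases hstep with ⟨hmem, hlt⟩ | ⟨hmem, hfpos⟩
    · refine ⟨fun d => g d + 1 * (if d = (b, c) then 1 else 0), ?_, ?_, ?_, ?_⟩
      · intro d hd
        have : d ≠ (b, c) := fun h => hd (h ▸ hmem)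
        simp [hsup d hd, this]
      · intro d hd hgd
        by_cases hdbc : d = (b, c)
        · subst hdbc; exact hlt
        · simp only [hdbc, if_false, mul_zero, add_zero] at hgd; exact hpos d hd hgd
      · intro d hd hgd
        by_cases hdbc : d = (b, c)
        · subst hdbc
          simp only [if_pos rfl, if_true, eq_self_iff_true, mul_one, one_mul] at hgd
          exact hneg _ hd (by linarith)
        · simp only [hdbc, if_false, mul_zero, add_zero] at hgd; exact hneg d hd hgd
      · intro v
        rw [key (b, c) hmem 1 v, ifSymm b v, ifSymm c v]
        ring
    · refine ⟨fun d => g d + (-1) * (if d = (c, b) then 1 else 0), ?_, ?_, ?_, ?_⟩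
      · intro d hd
        have : d ≠ (c, b) := fun h => hd (h ▸ hmem)
        simp [hsup d hd, this]
      · intro d hd hgd
        by_cases hdcb : d = (c, b)
        · subst hdcb
          simp only [if_pos rfl, if_true, eq_self_iff_true, mul_one, neg_one_mul] at hgd
          exact hpos _ hd (by linarith)
        · simp only [hdcb, if_false, mul_zero, add_zero] at hgd; exact hpos d hd hgd
      · intro d hd hgd
        by_cases hdcb : d = (c, b)
        · subst hdcb; exact hfpos
        · simp only [hdcb, if_false, mul_zero, add_zero] at hgd; exact hneg d hd hgd
      · intro v
        rw [key (c, b) hmem (-1) v, ifSymm b v, ifSymm c v]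
        ring

/-- max-flow min-cut: there is a flow of value exactly `minCutCap`, and it is a max flow. -/
lemma mfmc (E : Finset (V × V)) (w : V × V → ℝ) (s t : V)
    (hst : s ≠ t) (hw : ∀ e ∈ E, 0 ≤ w e) :
    ∃ f, IsFlow E w s t f ∧ flowValue E s f = minCutCap E w s t ∧
      ∀ g, IsFlow E w s t g → flowValue E s g ≤ flowValue E s f := by
  classical
  obtain ⟨f, hf, hmax⟩ := exists_maxflow E w s t hw
  refine ⟨f, hf, ?_, hmax⟩
  set R : Finset V := Finset.univ.filter
    (fun u => Relation.ReflTransGen (resStep E w f) s u) with hR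
  have hmemR : ∀ u, u ∈ R ↔ Relation.ReflTransGen (resStep E w f) s u := by
    intro u; simp [hR]
  have hsR : s ∈ R := (hmemR s).2 .refl
  have htR : t ∉ R := by
    intro ht
    obtain ⟨g, hsup, hposg, hnegg, hdiv⟩ := aug_exists E w f ((hmemR t).1 ht)
    set A := E.filter (fun d => 0 < g d) with hA
    set B := E.filter (fun d => g d < 0) with hB
    set T : Finset ℝ := insert 1 ((A.image fun d => (w d - f d) / g d)
      ∪ (B.image fun d => f d / (-g d))) with hT
    have hTne : T.Nonempty := Finset.insert_nonempty _ _
    set ε := T.min' hTne with hε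
    have hTpos : ∀ x ∈ T, 0 < x := by
      intro x hx
      rw [hT, Finset.mem_insert, Finset.mem_union] at hx
      rcases hx with rfl | hx | hx
      · norm_num
      · obtain ⟨d, hd, rfl⟩ := Finset.mem_image.1 hx
        rw [hA, Finset.mem_filter] at hd
        exact div_pos (by linarith [hposg d hd.1 hd.2]) hd.2
      · obtain ⟨d, hd, rfl⟩ := Finset.mem_image.1 hx
        rw [hB, Finset.mem_filter] at hd
        exact div_pos (hnegg d hd.1 hd.2) (by linarith [hd.2])
    have hεpos : 0 < ε := hTpos ε (T.min'_mem hTne)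
    set f' : V × V → ℝ := fun d => f d + ε * g d with hf'
    have hsum1 : ∀ v : V, ∑ e ∈ E.filter (fun e => e.1 = v), f' e
        = (∑ e ∈ E.filter (fun e => e.1 = v), f e)
          + ε * ∑ e ∈ E.filter (fun e => e.1 = v), g e := by
      intro v
      simp only [hf']
      rw [Finset.sum_add_distrib, ← Finset.mul_sum]
    have hsum2 : ∀ v : V, ∑ e ∈ E.filter (fun e => e.2 = v), f' e
        = (∑ e ∈ E.filter (fun e => e.2 = v), f e)
          + ε * ∑ e ∈ E.filter (fun e => e.2 = v), g e := by
      intro v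
      simp only [hf']
      rw [Finset.sum_add_distrib, ← Finset.mul_sum]
    have hflow' : IsFlow E w s t f' := by
      constructor
      · intro d hd
        rcases le_or_gt 0 (g d) with hg | hg
        · have h1 := hf.nonneg d hd
          have h2 : 0 ≤ ε * g d := mul_nonneg hεpos.le hg
          simp only [hf']; linarith
        · have hmem : f d / (-g d) ∈ T := by
            rw [hT]
            exact Finset.mem_insert_of_mem (Finset.mem_union_right _
              (Finset.mem_image.2 ⟨d, by rw [hB, Finset.mem_filter]; exact ⟨hd, hg⟩, rfl⟩))
          have hle := T.min'_le _ hmem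
          rw [← hε, le_div_iff₀ (by linarith : (0:ℝ) < -g d), mul_neg] at hle
          simp only [hf']; linarith
      · intro d hd
        rcases le_or_gt (g d) 0 with hg | hg
        · have h1 := hf.le_cap d hd
          have h2 : ε * g d ≤ 0 := mul_nonpos_of_nonneg_of_nonpos hεpos.le hg
          simp only [hf']; linarith
        · have hmem : (w d - f d) / g d ∈ T := by
            rw [hT]
            exact Finset.mem_insert_of_mem (Finset.mem_union_left _
              (Finset.mem_image.2 ⟨d, by rw [hA, Finset.mem_filter]; exact ⟨hd, hg⟩, rfl⟩))
          have hle := T.min'_le _ hmem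
          rw [← hε, le_div_iff₀ hg] at hle
          simp only [hf']; linarith
      · intro d hd
        simp only [hf']
        rw [hf.support d hd, hsup d hd, mul_zero, add_zero]
      · intro v hvs hvt
        have h1 := hdiv v
        rw [if_neg hvs, if_neg hvt, sub_zero] at h1
        have hg0 : ∑ e ∈ E.filter (fun e => e.1 = v), g e
            = ∑ e ∈ E.filter (fun e => e.2 = v), g e := by linarith
        rw [hsum1 v, hsum2 v, hf.conserve v hvs hvt, hg0]
    have hval' : flowValue E s f' = flowValue E s f + ε := by
      have h1 := hdiv s
      rw [if_pos rfl, if_neg hst, sub_zero] at h1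
      rw [flowValue, hsum1 s, hsum2 s, flowValue]
      linear_combination ε * h1
    have := hmax f' hflow'
    rw [hval'] at this
    linarith
  have hcutR : IsCut s t R := ⟨hsR, htR⟩
  have hvalcut : flowValue E s f = cutCap E w R := by
    rw [value_eq_cut hf hcutR]
    have hout : flowOut E f R = cutCap E w R := by
      refine Finset.sum_congr rfl fun d hd => ?_
      rw [Finset.mem_filter] at hd
      obtain ⟨hdE, h1, h2⟩ := hd
      by_contra hne
      have hlt : f d < w d := lt_of_le_of_ne (hf.le_cap d hdE) hne
      have hstep : resStep E w f d.1 d.2 := Or.inl (by rw [Prod.mk.eta]; exact ⟨hdE, hlt⟩)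
      exact h2 ((hmemR d.2).2 (((hmemR d.1).1 h1).tail hstep))
    have hin : flowIn E f R = 0 := by
      refine Finset.sum_eq_zero fun d hd => ?_
      rw [Finset.mem_filter] at hd
      obtain ⟨hdE, h1, h2⟩ := hd
      by_contra hne
      have hlt : 0 < f d := lt_of_le_of_ne (hf.nonneg d hdE) (fun h => hne h.symm)
      have hstep : resStep E w f d.2 d.1 := Or.inr (by rw [Prod.mk.eta]; exact ⟨hdE, hlt⟩)
      exact h1 ((hmemR d.1).2 (((hmemR d.2).1 h2).tail hstep))
    rw [hout, hin, sub_zero]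
  obtain ⟨C₀, hC₀, hC₀eq⟩ := minCutCap_mem hst E w
  have h2 : flowValue E s f ≤ minCutCap E w s t := hC₀eq ▸ weak_duality hf hC₀
  have h1 : minCutCap E w s t ≤ flowValue E s f := hvalcut ▸ minCutCap_le E w hcutR
  linarith

/-- GenFlowCut, forward direction: for a vital edge `e` and a mincut `C` for `e`,
there is a maximum flow with zero flow on all edges entering `C`, flow exactly
`w_min(e)` on `e`, and full saturation of every other contributing edge of `C`. -/
theorem genFlowCut_forward (E : Finset (V × V)) (w : V × V → ℝ) (s t : V)
    (hst : s ≠ t) (hpos : ∀ e ∈ E, 0 < w e) (e : V × V)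
    (hvit : Vital E w s t e) (C : Finset V) (hC : IsMincutFor E w s t e C) :
    ∃ f, IsMaxFlow E w s t f ∧
      (∀ e' ∈ E, e'.1 ∉ C → e'.2 ∈ C → f e' = 0) ∧
      f e = minCutCap E w s t - minCutCap (E.erase e) w s t ∧
      (∀ e' ∈ E, e' ≠ e → Contributes e' C → f e' = w e') := by
  classical
  obtain ⟨heE, hvlt⟩ := hvit
  set fstar := minCutCap E w s t with hfstar
  set m := minCutCap (E.erase e) w s t with hm
  have hwmin : 0 < fstar - m := by linarith
  have hcutErase : ∀ C' : Finset V, Contributes e C' →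
      cutCap (E.erase e) w C' = cutCap E w C' - w e := by
    intro C' hco
    rw [cutCap, cutCap, Finset.filter_erase]
    exact Finset.sum_erase_eq_sub (Finset.mem_filter.2 ⟨heE, hco⟩)
  have hcutErase' : ∀ C' : Finset V, ¬ Contributes e C' →
      cutCap (E.erase e) w C' = cutCap E w C' := by
    intro C' hco
    rw [cutCap, cutCap, Finset.filter_erase, Finset.erase_eq_of_notMem]
    intro hmem
    exact hco (Finset.mem_filter.1 hmem).2
  have hkey : cutCap E w C = m + w e := by
    have hle : m ≤ cutCap E w C - w e := by
      have h := minCutCap_le (E.erase e) w hC.1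
      rw [hcutErase C hC.2.1] at h
      exact h
    have hge : cutCap E w C - w e ≤ m := by
      obtain ⟨D, hD, hDeq⟩ := minCutCap_mem hst (E.erase e) w
      by_cases hco : Contributes e D
      · have h1 := hC.2.2 D hD hco
        rw [hcutErase D hco] at hDeq
        linarith
      · rw [hcutErase' D hco] at hDeq
        have h2 : fstar ≤ cutCap E w D := minCutCap_le E w hD
        linarith
    linarith
  set w' : V × V → ℝ := fun d => if d = e then fstar - m else w d with hw'def
  have hw'e : w' e = fstar - m := by simp [hw'def]
  have hw'ne : ∀ d, d ≠ e → w' d = w d := fun d hd => by simp [hw'def, hd]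
  have hfstar_le : fstar ≤ cutCap E w C := minCutCap_le E w hC.1
  have hw'le : ∀ d ∈ E, w' d ≤ w d := by
    intro d hd
    by_cases h : d = e
    · subst h; rw [hw'e]; linarith
    · rw [hw'ne d h]
  have hw'pos : ∀ d ∈ E, 0 ≤ w' d := by
    intro d hd
    by_cases h : d = e
    · subst h; rw [hw'e]; linarith
    · rw [hw'ne d h]; exact (hpos d hd).le
  have hcut' : ∀ C' : Finset V, Contributes e C' →
      cutCap E w' C' = cutCap E w C' - w e + (fstar - m) := by
    intro C' hco
    have hmem : e ∈ E.filter (fun d => d.1 ∈ C' ∧ d.2 ∉ C') := Finset.mem_filter.2 ⟨heE, hco⟩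
    rw [cutCap, cutCap, ← Finset.add_sum_erase _ w' hmem, ← Finset.add_sum_erase _ w hmem, hw'e]
    have hcong : ∑ d ∈ (E.filter (fun d => d.1 ∈ C' ∧ d.2 ∉ C')).erase e, w' d
        = ∑ d ∈ (E.filter (fun d => d.1 ∈ C' ∧ d.2 ∉ C')).erase e, w d :=
      Finset.sum_congr rfl fun d hd => hw'ne d (Finset.ne_of_mem_erase hd)
    rw [hcong]; ring
  have hcut'' : ∀ C' : Finset V, ¬ Contributes e C' → cutCap E w' C' = cutCap E w C' := by
    intro C' hco
    refine Finset.sum_congr rfl fun d hd => hw'ne d ?_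
    intro h
    subst h
    exact hco (Finset.mem_filter.1 hd).2
  have hmin' : minCutCap E w' s t = fstar := by
    apply le_antisymm
    · have h : cutCap E w' C = fstar := by rw [hcut' C hC.2.1, hkey]; ring
      exact h ▸ minCutCap_le E w' hC.1
    · apply le_csInf (cutSet_nonempty hst E w')
      rintro x ⟨C', hC', rfl⟩
      by_cases hco : Contributes e C'
      · rw [hcut' C' hco]
        have := hC.2.2 C' hC' hco
        linarith
      · rw [hcut'' C' hco]
        exact minCutCap_le E w hC'
  obtain ⟨f, hf', hval', _⟩ := mfmc E w' s t hst hw'pos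
  have hf : IsFlow E w s t f :=
    ⟨hf'.nonneg, fun d hd => (hf'.le_cap d hd).trans (hw'le d hd), hf'.support, hf'.conserve⟩
  have hval : flowValue E s f = fstar := by rw [hval', hmin']
  obtain ⟨C₀, hC₀, hC₀eq⟩ := minCutCap_mem hst E w
  have hmaxf : IsMaxFlow E w s t f := by
    refine ⟨hf, fun g hg => ?_⟩
    rw [hval]
    calc flowValue E s g ≤ cutCap E w C₀ := weak_duality hg hC₀
      _ = fstar := hC₀eq
  set F := E.filter (fun d => d.1 ∈ C ∧ d.2 ∉ C) with hF
  have heF : e ∈ F := Finset.mem_filter.2 ⟨heE, hC.2.1⟩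
  have hsplit : flowOut E f C = f e + ∑ d ∈ F.erase e, f d := (Finset.add_sum_erase F f heF).symm
  have hSle : ∑ d ∈ F.erase e, f d ≤ ∑ d ∈ F.erase e, w d :=
    Finset.sum_le_sum fun d hd =>
      hf.le_cap d (Finset.mem_filter.1 (Finset.mem_of_mem_erase hd)).1
  have hwsum : ∑ d ∈ F.erase e, w d = m := by
    have h := Finset.sum_erase_eq_sub (f := w) heF
    have hFc : ∑ d ∈ F, w d = cutCap E w C := rfl
    rw [h, hFc]
    linarith
  have hfe_le : f e ≤ fstar - m := by
    have h := hf'.le_cap e heE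
    rwa [hw'e] at h
  have hIn_nonneg : ∀ d ∈ E.filter (fun d => d.1 ∉ C ∧ d.2 ∈ C), 0 ≤ f d :=
    fun d hd => hf.nonneg d (Finset.mem_filter.1 hd).1
  have hInpos : 0 ≤ flowIn E f C := Finset.sum_nonneg hIn_nonneg
  have hbal : fstar = flowOut E f C - flowIn E f C := by
    rw [← hval, value_eq_cut hf hC.1]
  have hIn0 : flowIn E f C = 0 := by
    have h2 : ∑ d ∈ F.erase e, f d ≤ m := by linarith
    linarith
  have hfe : f e = fstar - m := by
    have h2 : ∑ d ∈ F.erase e, f d ≤ m := by linarith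
    linarith
  have hS : ∑ d ∈ F.erase e, f d = m := by linarith
  have hsat : ∀ d ∈ F.erase e, f d = w d := by
    have hnn : ∀ d ∈ F.erase e, 0 ≤ w d - f d := fun d hd =>
      sub_nonneg.2 (hf.le_cap d (Finset.mem_filter.1 (Finset.mem_of_mem_erase hd)).1)
    have hz : ∑ d ∈ F.erase e, (w d - f d) = 0 := by
      rw [Finset.sum_sub_distrib]
      linarith
    intro d hd
    have h := (Finset.sum_eq_zero_iff_of_nonneg hnn).1 hz d hd
    linarith
  refine ⟨f, hmaxf, ?_, hfe, ?_⟩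
  · intro e' he' h1 h2
    have hmem : e' ∈ E.filter (fun d => d.1 ∉ C ∧ d.2 ∈ C) :=
      Finset.mem_filter.2 ⟨he', h1, h2⟩
    exact (Finset.sum_eq_zero_iff_of_nonneg hIn_nonneg).1 hIn0 e' hmem
  · intro e' he' hne hco
    exact hsat e' (Finset.mem_erase.2 ⟨hne, Finset.mem_filter.2 ⟨he', hco⟩⟩)
end

section
/- Let e be a vital edge with mincut C(e). If capacities of some contributing edges of C(e) (other than e) are decreased (or those edges deleted) and the minimum (s,t)-cut capacity of the resulting graph equals that of G, then e remains vital in the resulting graph and C(e) remains a mincut for e. -/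
open Finset

variable {V : Type*} [Fintype V] [DecidableEq V]

private lemma minCutCap_le_cut (E : Finset (V × V)) (w : V × V → ℝ) (s t : V)
    (hw : ∀ e ∈ E, 0 ≤ w e) (D : Finset V) (hD : IsCut s t D) :
    minCutCap E w s t ≤ cutCap E w D := by
  apply csInf_le
  · refine ⟨0, ?_⟩
    rintro x ⟨C, hC, rfl⟩
    exact Finset.sum_nonneg fun e he => hw e (Finset.mem_filter.mp he).1
  · exact ⟨D, hD, rfl⟩

private lemma le_minCutCap (E : Finset (V × V)) (w : V × V → ℝ) (s t : V) (hst : s ≠ t)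
    (b : ℝ) (hb : ∀ D, IsCut s t D → b ≤ cutCap E w D) :
    b ≤ minCutCap E w s t := by
  apply le_csInf
  · exact ⟨cutCap E w {s}, {s}, ⟨Finset.mem_singleton_self s,
      by simp [Ne.symm hst]⟩, rfl⟩
  · rintro x ⟨D, hD, rfl⟩
    exact hb D hD

private lemma cutCap_mono (E E' : Finset (V × V)) (w w' : V × V → ℝ) (hsub : E' ⊆ E)
    (hle : ∀ e ∈ E', w' e ≤ w e) (hnn : ∀ e ∈ E, 0 ≤ w e) (D : Finset V) :
    cutCap E' w' D ≤ cutCap E w D := by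
  unfold cutCap
  calc ∑ e ∈ E'.filter (fun e => e.1 ∈ D ∧ e.2 ∉ D), w' e
      ≤ ∑ e ∈ E'.filter (fun e => e.1 ∈ D ∧ e.2 ∉ D), w e :=
        Finset.sum_le_sum fun e he => hle e (Finset.mem_filter.mp he).1
    _ ≤ ∑ e ∈ E.filter (fun e => e.1 ∈ D ∧ e.2 ∉ D), w e :=
        Finset.sum_le_sum_of_subset_of_nonneg
          (Finset.filter_subset_filter _ hsub)
          (fun e he _ => hnn e (Finset.mem_filter.mp he).1)

/-- if capacities of some contributing edges of `C(e)` other than `e` are decreased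
(or those edges deleted) without changing the min (s,t)-cut capacity, then `e`
remains vital and `C(e)` remains a mincut for `e`. -/
theorem vital_edge_remains_vital (E E' : Finset (V × V)) (w w' : V × V → ℝ) (s t : V)
    (hst : s ≠ t) (hpos : ∀ e ∈ E, 0 < w e)
    (e : V × V) (hvit : Vital E w s t e) (C : Finset V) (hC : IsMincutFor E w s t e C)
    (hsub : E' ⊆ E) (heE' : e ∈ E')
    (hw' : ∀ e' ∈ E', 0 ≤ w' e' ∧ w' e' ≤ w e')
    (hchanged : ∀ e' ∈ E, (e' ∉ E' ∨ w' e' ≠ w e') → Contributes e' C ∧ e' ≠ e)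
    (heq : minCutCap E' w' s t = minCutCap E w s t) :
    Vital E' w' s t e ∧ IsMincutFor E' w' s t e C := by
  classical
  obtain ⟨heE, hlt⟩ := hvit
  obtain ⟨hCcut, hCe, hCmin⟩ := hC
  have hwnn : ∀ e' ∈ E, 0 ≤ w e' := fun e' h => (hpos e' h).le
  have hw'nn : ∀ e' ∈ E', 0 ≤ w' e' := fun e' h => (hw' e' h).1
  have hw'le : ∀ e' ∈ E', w' e' ≤ w e' := fun e' h => (hw' e' h).2
  -- the loss function
  set L : V × V → ℝ := fun e' => if e' ∈ E' then w e' - w' e' else w e' with hL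
  have hLnn : ∀ e' ∈ E, 0 ≤ L e' := by
    intro e' he'
    simp only [hL]
    split
    · linarith [hw'le e' ‹e' ∈ E'›]
    · exact hwnn e' he'
  have hLzero : ∀ e', e' ∈ E' → w' e' = w e' → L e' = 0 := by
    intro e' h1 h2
    simp [hL, h1, h2]
  -- decomposition
  have hdecomp : ∀ D : Finset V, cutCap E w D =
      cutCap E' w' D + ∑ e' ∈ E.filter (fun e' => e'.1 ∈ D ∧ e'.2 ∉ D), L e' := by
    intro D
    unfold cutCap
    have h1 : ∀ e' : V × V, w e' = (if e' ∈ E' then w' e' else 0) + L e' := by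
      intro e'
      simp only [hL]
      split <;> ring
    have h2 : (E.filter (fun e' => e'.1 ∈ D ∧ e'.2 ∉ D)).filter (fun e' => e' ∈ E')
        = E'.filter (fun e' => e'.1 ∈ D ∧ e'.2 ∉ D) := by
      ext a
      simp only [Finset.mem_filter]
      constructor
      · rintro ⟨⟨_, hP⟩, hE'⟩; exact ⟨hE', hP⟩
      · rintro ⟨hE', hP⟩; exact ⟨⟨hsub hE', hP⟩, hE'⟩
    calc ∑ e' ∈ E.filter (fun e' => e'.1 ∈ D ∧ e'.2 ∉ D), w e'
        = ∑ e' ∈ E.filter (fun e' => e'.1 ∈ D ∧ e'.2 ∉ D),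
            ((if e' ∈ E' then w' e' else 0) + L e') := by
          exact Finset.sum_congr rfl fun e' _ => h1 e'
      _ = (∑ e' ∈ E.filter (fun e' => e'.1 ∈ D ∧ e'.2 ∉ D),
            (if e' ∈ E' then w' e' else 0))
          + ∑ e' ∈ E.filter (fun e' => e'.1 ∈ D ∧ e'.2 ∉ D), L e' :=
          Finset.sum_add_distrib
      _ = (∑ e' ∈ E'.filter (fun e' => e'.1 ∈ D ∧ e'.2 ∉ D), w' e')
          + ∑ e' ∈ E.filter (fun e' => e'.1 ∈ D ∧ e'.2 ∉ D), L e' := by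
          congr 1
          rw [← h2]
          exact (Finset.sum_filter _ _).symm
  -- part 1 : vitality
  have hmono : minCutCap (E'.erase e) w' s t ≤ minCutCap (E.erase e) w s t := by
    apply le_minCutCap _ _ _ _ hst
    intro D hD
    refine le_trans (minCutCap_le_cut _ _ _ _ ?_ D hD) ?_
    · exact fun e' h => hw'nn e' (Finset.erase_subset _ _ h)
    · exact cutCap_mono _ _ _ _ (Finset.erase_subset_erase _ hsub)
        (fun e' h => hw'le e' (Finset.erase_subset _ _ h))
        (fun e' h => hwnn e' (Finset.erase_subset _ _ h)) D
  have hvit' : Vital E' w' s t e := ⟨heE', by rw [heq]; exact lt_of_le_of_lt hmono hlt⟩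
  -- part 2 : mincut for e
  refine ⟨hvit', hCcut, hCe, ?_⟩
  intro C' hC' hctb
  have hSle : ∑ e' ∈ E.filter (fun e' => e'.1 ∈ C' ∧ e'.2 ∉ C'), L e'
      ≤ ∑ e' ∈ E.filter (fun e' => e'.1 ∈ C ∧ e'.2 ∉ C), L e' := by
    have hstep : ∑ e' ∈ E.filter (fun e' => e'.1 ∈ C' ∧ e'.2 ∉ C'), L e'
        = ∑ e' ∈ E.filter (fun e' => (e'.1 ∈ C' ∧ e'.2 ∉ C') ∧ (e'.1 ∈ C ∧ e'.2 ∉ C)), L e' := by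
      symm
      apply Finset.sum_subset
      · exact Finset.filter_subset_filter _ (fun a ha => ha) |>.trans
          (by intro a ha; simp only [Finset.mem_filter] at ha ⊢; exact ⟨ha.1, ha.2.1⟩)
      · intro e' he' hne
        simp only [Finset.mem_filter] at he' hne
        by_contra hL0
        have hch : e' ∉ E' ∨ w' e' ≠ w e' := by
          by_contra hcon
          push_neg at hcon
          exact hL0 (hLzero e' hcon.1 hcon.2)
        have := (hchanged e' he'.1 hch).1
        exact hne ⟨he'.1, he'.2, this⟩
    rw [hstep]
    apply Finset.sum_le_sum_of_subset_of_nonneg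
    · intro a ha
      simp only [Finset.mem_filter] at ha ⊢
      exact ⟨ha.1, ha.2.2⟩
    · exact fun e' he' _ => hLnn e' (Finset.mem_filter.mp he').1
  have h1 := hdecomp C
  have h2 := hdecomp C'
  have h3 := hCmin C' hC' hctb
  linarith
end
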